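/- arXiv:1209.5348 — 8 statements merged into one kernel-verified Lean document; each statement's English description precedes it below -/
import Mathlib

section
/- Let F : [0, ∞) → ℝ be continuously differentiable with derivative f > 0, F(0) = 0, F(z) < 1 for all z, and suppose the hazard rate h(z) = f(z)/(1 − F(z)) is nondecreasing (monotone hazard rate). Let p_M > 0 satisfy p_M · h(p_M) = 1 (the first-order condition for the Myerson monopoly price). Then 1 − F(p_M) ≥ 1/e; equivalently, h(p_M) ≥ 1/(e · R_M), where R_M = p_M (1 − F(p_M)) is the Myerson revenue. -/
/-- For an MHR distribution, the survival probability at the Myerson price is at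
least `1/e`; equivalently `h(p_M) ≥ 1/(e R_M)` with `R_M = p_M (1 - F(p_M))`. -/
theorem stmt_2 (F f : ℝ → ℝ)
    (hderiv : ∀ z ∈ Set.Ici (0:ℝ), HasDerivAt F (f z) z)
    (hcont : ContinuousOn f (Set.Ici 0))
    (hfpos : ∀ z ∈ Set.Ici (0:ℝ), 0 < f z)
    (hF0 : F 0 = 0)
    (hF1 : ∀ z ∈ Set.Ici (0:ℝ), F z < 1)
    (hMHR : ∀ x ∈ Set.Ici (0:ℝ), ∀ y ∈ Set.Ici (0:ℝ), x ≤ y →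
      f x / (1 - F x) ≤ f y / (1 - F y))
    (pM : ℝ) (hpM : 0 < pM)
    (hFOC : pM * (f pM / (1 - F pM)) = 1) :
    1 / Real.exp 1 ≤ 1 - F pM ∧
      1 / (Real.exp 1 * (pM * (1 - F pM))) ≤ f pM / (1 - F pM) := by
  have hpM0 : (0:ℝ) ≤ pM := hpM.le
  have hsub : Set.Icc (0:ℝ) pM ⊆ Set.Ici 0 := fun x hx => hx.1
  have hSpos : ∀ z ∈ Set.Ici (0:ℝ), 0 < 1 - F z := fun z hz => by
    linarith [hF1 z hz]
  -- G = -log(1 - F)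
  set G : ℝ → ℝ := fun z => -Real.log (1 - F z) with hG
  have hGderiv : ∀ z ∈ Set.Icc (0:ℝ) pM,
      HasDerivWithinAt G (f z / (1 - F z)) (Set.Icc 0 pM) z := by
    intro z hz
    have hz' : z ∈ Set.Ici (0:ℝ) := hsub hz
    have h1 : HasDerivAt (fun z => 1 - F z) (-(f z)) z := by
      simpa using ((hderiv z hz').const_sub 1)
    have h2 : HasDerivAt (fun z => Real.log (1 - F z)) (-(f z) / (1 - F z)) z :=
      h1.log (ne_of_gt (hSpos z hz'))
    have h3 : HasDerivAt G (f z / (1 - F z)) z := by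
      simpa [hG, neg_div] using h2.fun_neg
    exact h3.hasDerivWithinAt
  have hbound : ∀ z ∈ Set.Icc (0:ℝ) pM, ‖f z / (1 - F z)‖ ≤ 1 / pM := by
    intro z hz
    have hz' : z ∈ Set.Ici (0:ℝ) := hsub hz
    have hle : f z / (1 - F z) ≤ f pM / (1 - F pM) :=
      hMHR z hz' pM (Set.mem_Ici.mpr hpM0) hz.2
    have hM : f pM / (1 - F pM) = 1 / pM :=
      eq_one_div_of_mul_eq_one_left (by linarith [hFOC] : f pM / (1 - F pM) * pM = 1)
    have hpos : 0 < f z / (1 - F z) :=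
      div_pos (hfpos z hz') (hSpos z hz')
    rw [Real.norm_eq_abs, abs_of_pos hpos]
    rw [hM] at hle; exact hle
  have key : ‖G pM - G 0‖ ≤ (1 / pM) * ‖pM - 0‖ :=
    Convex.norm_image_sub_le_of_norm_hasDerivWithin_le hGderiv hbound
      (convex_Icc 0 pM) (Set.left_mem_Icc.mpr hpM0) (Set.right_mem_Icc.mpr hpM0)
  have hG0 : G 0 = 0 := by simp [hG, hF0]
  have key2 : -Real.log (1 - F pM) ≤ 1 := by
    have h1 : ‖pM - 0‖ = pM := by
      rw [sub_zero, Real.norm_eq_abs, abs_of_pos hpM]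
    rw [hG0, sub_zero, h1] at key
    have : (1 / pM) * pM = 1 := by field_simp
    rw [this] at key
    calc -Real.log (1 - F pM) ≤ ‖G pM‖ := by
          rw [hG, Real.norm_eq_abs]; exact le_abs_self _
      _ ≤ 1 := key
  have hSp : 0 < 1 - F pM := hSpos pM (Set.mem_Ici.mpr hpM0)
  have h1 : 1 / Real.exp 1 ≤ 1 - F pM := by
    have hlog : -1 ≤ Real.log (1 - F pM) := by linarith
    have := Real.exp_le_exp.mpr hlog
    rw [Real.exp_log hSp] at this
    calc 1 / Real.exp 1 = Real.exp (-1) := by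
          rw [Real.exp_neg]; ring
      _ ≤ 1 - F pM := this
  refine ⟨h1, ?_⟩
  have hM : f pM / (1 - F pM) = 1 / pM :=
    eq_one_div_of_mul_eq_one_left (by linarith [hFOC] : f pM / (1 - F pM) * pM = 1)
  rw [hM]
  apply one_div_le_one_div_of_le hpM
  have he : Real.exp 1 * (1 / Real.exp 1) = 1 :=
    mul_one_div_cancel (Real.exp_pos 1).ne'
  nlinarith [mul_le_mul_of_nonneg_left h1 (mul_nonneg (Real.exp_pos 1).le hpM0), he, hpM0]
end

section
/- Let F : [0, ∞) → ℝ be continuously differentiable with derivative f > 0, F(0) = 0, F < 1, with nondecreasing hazard rate h(z) = f(z)/(1 − F(z)), and let p_M > 0. Define the hybrid distribution F̃ by 1 − F̃(v) = exp(−∫₀^v h̃(u) du), where h̃(u) = h(u) for u ≤ p_M and h̃(u) = h(p_M) for u > p_M. Then 1 − F̃(v) ≥ 1 − F(v) for all v ≥ 0, and consequently, for every outside option R ≥ 0, sup_{p ≥ 0} (1 − F(p))(p − R) ≤ sup_{p ≥ 0} (1 − F̃(p))(p − R). -/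
/-- The hybrid distribution `F̃` (which keeps the hazard rate of `F` up to `p_M`
and freezes it at `h(p_M)` thereafter) stochastically dominates `F`, hence its
optimal incremental revenue is at least that of `F` for every outside option. -/
theorem stmt_3 (F f : ℝ → ℝ)
    (hderiv : ∀ z ∈ Set.Ici (0:ℝ), HasDerivAt F (f z) z)
    (hcont : ContinuousOn f (Set.Ici 0))
    (hfpos : ∀ z ∈ Set.Ici (0:ℝ), 0 < f z)
    (hF0 : F 0 = 0)
    (hF1 : ∀ z ∈ Set.Ici (0:ℝ), F z < 1)
    (hMHR : ∀ x ∈ Set.Ici (0:ℝ), ∀ y ∈ Set.Ici (0:ℝ), x ≤ y →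
      f x / (1 - F x) ≤ f y / (1 - F y))
    (pM : ℝ) (hpM : 0 < pM)
    (Ft : ℝ → ℝ)
    (hFt : ∀ v, Ft v = 1 - Real.exp (-∫ u in (0:ℝ)..v,
      if u ≤ pM then f u / (1 - F u) else f pM / (1 - F pM))) :
    (∀ v ∈ Set.Ici (0:ℝ), 1 - F v ≤ 1 - Ft v) ∧
      ∀ R ∈ Set.Ici (0:ℝ),
        sSup ((fun p => (1 - F p) * (p - R)) '' Set.Ici 0) ≤
          sSup ((fun p => (1 - Ft p) * (p - R)) '' Set.Ici 0) := by
  have hsub : ∀ z ∈ Set.Ici (0:ℝ), 0 < 1 - F z := fun z hz => by linarith [hF1 z hz]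
  have hFcont : ContinuousOn F (Set.Ici 0) := fun x hx =>
    (hderiv x hx).continuousAt.continuousWithinAt
  have hhcont : ContinuousOn (fun z => f z / (1 - F z)) (Set.Ici 0) :=
    hcont.div (continuousOn_const.sub hFcont) (fun z hz => (hsub z hz).ne')
  have hHcont : ContinuousOn (fun u => f (min u pM) / (1 - F (min u pM))) (Set.Ici 0) :=
    hhcont.comp ((continuous_id.min continuous_const).continuousOn)
      (fun u hu => le_min hu hpM.le)
  have hite_eq : ∀ v : ℝ, (∫ u in (0:ℝ)..v,
      if u ≤ pM then f u / (1 - F u) else f pM / (1 - F pM)) =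
      ∫ u in (0:ℝ)..v, f (min u pM) / (1 - F (min u pM)) := by
    intro v
    apply intervalIntegral.integral_congr
    intro u _
    rcases le_or_gt u pM with hu | hu
    · simp [hu, min_eq_left hu]
    · simp [not_le.2 hu, min_eq_right hu.le]
  have keyF : ∀ v ∈ Set.Ici (0:ℝ),
      1 - F v = Real.exp (-∫ u in (0:ℝ)..v, f u / (1 - F u)) := by
    intro v hv
    have hsubset : Set.uIcc (0:ℝ) v ⊆ Set.Ici 0 := by
      rw [Set.uIcc_of_le hv]; exact fun x hx => hx.1
    have hFTC : ∫ u in (0:ℝ)..v, -(f u / (1 - F u))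
        = Real.log (1 - F v) - Real.log (1 - F 0) := by
      apply intervalIntegral.integral_eq_sub_of_hasDerivAt
      · intro x hx
        have hx0 : x ∈ Set.Ici (0:ℝ) := hsubset hx
        have d1 : HasDerivAt (fun y => 1 - F y) (-(f x)) x := (hderiv x hx0).const_sub 1
        have := d1.log (hsub x hx0).ne'
        simpa [neg_div] using this
      · exact ((hhcont.mono hsubset).neg).intervalIntegrable
    rw [intervalIntegral.integral_neg, hF0, sub_zero, Real.log_one, sub_zero] at hFTC
    rw [hFTC]
    exact (Real.exp_log (hsub v hv)).symm
  have hmono : ∀ v ∈ Set.Ici (0:ℝ),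
      (∫ u in (0:ℝ)..v, f (min u pM) / (1 - F (min u pM))) ≤
        ∫ u in (0:ℝ)..v, f u / (1 - F u) := by
    intro v hv
    have hsubset : Set.uIcc (0:ℝ) v ⊆ Set.Ici 0 := by
      rw [Set.uIcc_of_le hv]; exact fun x hx => hx.1
    apply intervalIntegral.integral_mono_on hv
      ((hHcont.mono hsubset).intervalIntegrable)
      ((hhcont.mono hsubset).intervalIntegrable)
    intro u hu
    exact hMHR (min u pM) (le_min hu.1 hpM.le) u hu.1 (min_le_left _ _)
  have hFtexp : ∀ p, 1 - Ft p =
      Real.exp (-∫ u in (0:ℝ)..p, f (min u pM) / (1 - F (min u pM))) := fun p => by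
    rw [hFt p, sub_sub_cancel, hite_eq p]
  have hineq1 : ∀ v ∈ Set.Ici (0:ℝ), 1 - F v ≤ 1 - Ft v := by
    intro v hv
    rw [hFtexp v, keyF v hv]
    exact Real.exp_le_exp.2 (neg_le_neg (hmono v hv))
  refine ⟨hineq1, fun R hR => ?_⟩
  have hR' : (0:ℝ) ≤ R := hR
  have hf0 : 0 < f 0 := hfpos 0 Set.self_mem_Ici
  have hlow : ∀ p ∈ Set.Ici (0:ℝ),
      p * f 0 ≤ ∫ u in (0:ℝ)..p, f (min u pM) / (1 - F (min u pM)) := by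
    intro p hp
    have hsubset : Set.uIcc (0:ℝ) p ⊆ Set.Ici 0 := by
      rw [Set.uIcc_of_le hp]; exact fun x hx => hx.1
    have := intervalIntegral.integral_mono_on hp
      (intervalIntegrable_const (c := f 0) (μ := MeasureTheory.volume))
      ((hHcont.mono hsubset).intervalIntegrable)
      (fun u hu => by
        have := hMHR 0 Set.self_mem_Ici (min u pM) (le_min hu.1 hpM.le) (le_min hu.1 hpM.le)
        simpa [hF0] using this)
    simpa using this
  have hbound : ∀ p ∈ Set.Ici (0:ℝ), (1 - Ft p) * (p - R) ≤ 1 / f 0 := by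
    intro p hp
    have hFtnn : 0 ≤ 1 - Ft p := by rw [hFtexp]; positivity
    have e1 : (1 - Ft p) * (p - R) ≤ (1 - Ft p) * p :=
      mul_le_mul_of_nonneg_left (by linarith) hFtnn
    have e2 : (1 - Ft p) * p ≤ Real.exp (-(p * f 0)) * p := by
      apply mul_le_mul_of_nonneg_right _ hp
      rw [hFtexp]
      exact Real.exp_le_exp.2 (neg_le_neg (hlow p hp))
    have e3 : Real.exp (-(p * f 0)) * p ≤ 1 / f 0 := by
      rw [Real.exp_neg, le_div_iff₀ hf0]
      have hx : p * f 0 + 1 ≤ Real.exp (p * f 0) := Real.add_one_le_exp _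
      have hep : 0 < Real.exp (p * f 0) := Real.exp_pos _
      rw [inv_mul_eq_div, div_mul_eq_mul_div, div_le_one hep]
      nlinarith
    linarith
  have bddB : BddAbove ((fun p => (1 - Ft p) * (p - R)) '' Set.Ici 0) :=
    ⟨1 / f 0, by rintro x ⟨p, hp, rfl⟩; exact hbound p hp⟩
  have h0B : (0:ℝ) ≤ sSup ((fun p => (1 - Ft p) * (p - R)) '' Set.Ici 0) := by
    have hmem : (0:ℝ) ∈ (fun p => (1 - Ft p) * (p - R)) '' Set.Ici 0 :=
      ⟨R, hR, by ring⟩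
    exact le_csSup bddB hmem
  apply Real.sSup_le _ h0B
  rintro x ⟨p, hp, rfl⟩
  rcases le_or_gt R p with hc | hc
  · calc (1 - F p) * (p - R) ≤ (1 - Ft p) * (p - R) :=
          mul_le_mul_of_nonneg_right (hineq1 p hp) (by linarith)
      _ ≤ _ := le_csSup bddB ⟨p, hp, rfl⟩
  · have : (1 - F p) * (p - R) ≤ 0 :=
      mul_nonpos_of_nonneg_of_nonpos (by linarith [hF1 p hp]) (by linarith)
    exact this.trans h0B
end

section
/- Let F : [0, ∞) → ℝ be continuously differentiable with derivative f > 0, F(0) = 0, F < 1, with nondecreasing hazard rate h(z) = f(z)/(1 − F(z)), and let p_M > 0 satisfy p_M · h(p_M) = 1. Define the hybrid distribution F̃ by 1 − F̃(v) = exp(−∫₀^v h̃(u) du), where h̃(u) = h(u) for u ≤ p_M and h̃(u) = h(p_M) for u > p_M. Then for every R ≥ 0, sup_{p ≥ 0} (1 − F̃(p))(p − R) = R_M · e^{−R · h(p_M)}, where R_M = p_M(1 − F(p_M)), and the supremum is attained at η̃ = R + p_M. -/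
/-- For the hybrid distribution `F̃`, for every outside option `R ≥ 0`, the
incremental revenue is maximized at `η̃ = R + p_M`, where it equals
`R_M e^{-R h(p_M)}` with `R_M = p_M (1 - F(p_M))`. -/
theorem stmt_6 (F f : ℝ → ℝ)
    (hderiv : ∀ z ∈ Set.Ici (0:ℝ), HasDerivAt F (f z) z)
    (hcont : ContinuousOn f (Set.Ici 0))
    (hfpos : ∀ z ∈ Set.Ici (0:ℝ), 0 < f z)
    (hF0 : F 0 = 0)
    (hF1 : ∀ z ∈ Set.Ici (0:ℝ), F z < 1)
    (hMHR : ∀ x ∈ Set.Ici (0:ℝ), ∀ y ∈ Set.Ici (0:ℝ), x ≤ y →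
      f x / (1 - F x) ≤ f y / (1 - F y))
    (pM : ℝ) (hpM : 0 < pM)
    (hFOC : pM * (f pM / (1 - F pM)) = 1)
    (Ft : ℝ → ℝ)
    (hFt : ∀ v, Ft v = 1 - Real.exp (-∫ u in (0:ℝ)..v,
      if u ≤ pM then f u / (1 - F u) else f pM / (1 - F pM))) :
    ∀ R ∈ Set.Ici (0:ℝ),
      IsMaxOn (fun p => (1 - Ft p) * (p - R)) (Set.Ici 0) (R + pM) ∧
        (1 - Ft (R + pM)) * ((R + pM) - R) =
          pM * (1 - F pM) * Real.exp (-R * (f pM / (1 - F pM))) := by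
  set h : ℝ → ℝ := fun u => f u / (1 - F u) with hh
  set hM : ℝ := h pM with hhM
  set ht : ℝ → ℝ := fun u => if u ≤ pM then h u else hM with hht
  have hpM0 : (pM:ℝ) ∈ Set.Ici (0:ℝ) := le_of_lt hpM
  have hFpos : ∀ z ∈ Set.Ici (0:ℝ), 0 < 1 - F z := fun z hz => by linarith [hF1 z hz]
  have hMpos : 0 < hM := div_pos (hfpos pM hpM0) (hFpos pM hpM0)
  have hcontF : ContinuousOn F (Set.Ici 0) := fun z hz =>
    (hderiv z hz).continuousAt.continuousWithinAt
  have hconth : ContinuousOn h (Set.Ici 0) := by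
    apply hcont.div (continuousOn_const.sub hcontF)
    intro z hz; exact ne_of_gt (hFpos z hz)
  -- derivative of -log(1-F)
  have hL : ∀ z ∈ Set.Ici (0:ℝ), HasDerivAt (fun z => -Real.log (1 - F z)) (h z) z := by
    intro z hz
    have h1 : HasDerivAt (fun z => 1 - F z) (-f z) z := by
      simpa using (hderiv z hz).const_sub 1
    have h2 := h1.log (ne_of_gt (hFpos z hz))
    have h3 := h2.neg
    exact h3.congr_deriv (by show -(-f z / (1 - F z)) = f z / (1 - F z); ring)
  -- interval integrability of h on [a,b] ⊆ Ici 0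
  have hInth : ∀ a b : ℝ, 0 ≤ a → a ≤ b → IntervalIntegrable h MeasureTheory.volume a b := by
    intro a b ha hab
    apply ContinuousOn.intervalIntegrable
    apply hconth.mono
    rw [Set.uIcc_of_le hab]
    intro x hx; exact le_trans ha hx.1
  -- integral of h
  have hIh : ∀ v : ℝ, 0 ≤ v → ∫ u in (0:ℝ)..v, h u = -Real.log (1 - F v) := by
    intro v hv
    have := intervalIntegral.integral_eq_sub_of_hasDerivAt (f := fun z => -Real.log (1 - F z))
      (f' := h) (a := 0) (b := v) (fun x hx => by
        apply hL
        rw [Set.uIcc_of_le hv] at hx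
        exact hx.1) (hInth 0 v le_rfl hv)
    rw [this]
    simp only [hF0, sub_zero, Real.log_one, neg_zero]
  -- integral of ht for v ≤ pM
  have hIht1 : ∀ v : ℝ, 0 ≤ v → v ≤ pM → ∫ u in (0:ℝ)..v, ht u = -Real.log (1 - F v) := by
    intro v hv hvpM
    rw [← hIh v hv]
    apply intervalIntegral.integral_congr
    intro u hu
    rw [Set.uIcc_of_le hv] at hu
    simp only [hht]
    rw [if_pos (le_trans hu.2 hvpM)]
  -- integral of ht for v ≥ pM
  have hIht2 : ∀ v : ℝ, pM ≤ v →
      ∫ u in (0:ℝ)..v, ht u = -Real.log (1 - F pM) + hM * (v - pM) := by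
    intro v hv
    have hint1 : IntervalIntegrable ht MeasureTheory.volume 0 pM := by
      apply (hInth 0 pM le_rfl hpM.le).congr
      intro u hu
      rw [Set.uIoc_of_le hpM.le] at hu
      simp only [hht]
      rw [if_pos hu.2]
    have hint2 : IntervalIntegrable ht MeasureTheory.volume pM v := by
      apply (intervalIntegrable_const (c := hM) (a := pM) (b := v)).congr
      intro u hu
      rw [Set.uIoc_of_le hv] at hu
      simp only [hht]
      rw [if_neg (not_le.mpr hu.1)]
    rw [← intervalIntegral.integral_add_adjacent_intervals hint1 hint2]
    have e1 : ∫ u in (0:ℝ)..pM, ht u = -Real.log (1 - F pM) := hIht1 pM hpM.le le_rfl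
    have e2 : ∫ u in pM..v, ht u = hM * (v - pM) := by
      have : ∫ u in pM..v, ht u = ∫ _ in pM..v, hM := by
        apply intervalIntegral.integral_congr
        intro u hu
        rw [Set.uIcc_of_le hv] at hu
        simp only [hht]
        rcases eq_or_lt_of_le hu.1 with h' | h'
        · rw [if_pos h'.ge, ← h']
        · rw [if_neg (not_le.mpr h')]
      rw [this, intervalIntegral.integral_const, smul_eq_mul, mul_comm]
    rw [e1, e2]
  -- survival function of Ft
  have hS1 : ∀ v : ℝ, 0 ≤ v → v ≤ pM → 1 - Ft v = 1 - F v := by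
    intro v hv hvpM
    rw [hFt v]
    have : (∫ u in (0:ℝ)..v, if u ≤ pM then f u / (1 - F u) else f pM / (1 - F pM))
        = ∫ u in (0:ℝ)..v, ht u := rfl
    rw [this, hIht1 v hv hvpM]
    rw [neg_neg, Real.exp_log (hFpos v hv)]
    ring
  have hS2 : ∀ v : ℝ, pM ≤ v →
      1 - Ft v = (1 - F pM) * Real.exp (-(hM * (v - pM))) := by
    intro v hv
    rw [hFt v]
    have : (∫ u in (0:ℝ)..v, if u ≤ pM then f u / (1 - F u) else f pM / (1 - F pM))
        = ∫ u in (0:ℝ)..v, ht u := rfl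
    rw [this, hIht2 v hv]
    rw [neg_add, neg_neg, Real.exp_add, Real.exp_log (hFpos pM hpM0)]
    ring
  -- the revenue function (1-F p)(p-R) is monotone on [0, pM]
  intro R hR
  rw [Set.mem_Ici] at hR
  have hEta : pM ≤ R + pM := by linarith
  have hval : (1 - Ft (R + pM)) * ((R + pM) - R)
      = pM * (1 - F pM) * Real.exp (-R * hM) := by
    rw [hS2 _ hEta]
    have : R + pM - pM = R := by ring
    rw [this]
    ring_nf
  -- key: value at the max point
  have hmaxval : (1 - Ft (R + pM)) * ((R + pM) - R)
      = pM * (1 - F pM) * Real.exp (-R * hM) := hval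
  constructor
  · -- IsMaxOn
    intro p hp
    rw [Set.mem_Ici] at hp
    simp only [Set.mem_setOf_eq]
    rw [hmaxval]
    rcases le_or_gt p pM with hppM | hppM
    · -- case p ≤ pM
      rw [hS1 p hp hppM]
      -- monotonicity of (1-F p)(p-R) on [0,pM]
      have hmono : MonotoneOn (fun p => (1 - F p) * (p - R)) (Set.Icc 0 pM) := by
        apply monotoneOn_of_deriv_nonneg (convex_Icc 0 pM)
        · apply ContinuousOn.mul
          · apply continuousOn_const.sub (hcontF.mono _)
            intro x hx; exact hx.1
          · exact (continuousOn_id.sub continuousOn_const)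
        · intro x hx
          rw [interior_Icc] at hx
          have hx0 : x ∈ Set.Ici (0:ℝ) := le_of_lt hx.1
          exact (((hderiv x hx0).const_sub 1).mul ((hasDerivAt_id x).sub_const R)).differentiableAt.differentiableWithinAt
        · intro x hx
          rw [interior_Icc] at hx
          have hx0 : x ∈ Set.Ici (0:ℝ) := le_of_lt hx.1
          have hd : HasDerivAt (fun p => (1 - F p) * (p - R))
              ((-f x) * (x - R) + (1 - F x) * 1) x :=
            ((hderiv x hx0).const_sub 1).mul ((hasDerivAt_id x).sub_const R)
          rw [hd.deriv]
          have h1 : f x * x ≤ 1 - F x := by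
            have hhx : h x ≤ hM := hMHR x hx0 pM hpM0 (le_of_lt hx.2)
            have : x * h x ≤ pM * hM := by
              apply mul_le_mul (le_of_lt hx.2) hhx _ hpM.le
              exact le_of_lt (div_pos (hfpos x hx0) (hFpos x hx0))
            have hFx := hFpos x hx0
            have this2 : x * (f x / (1 - F x)) ≤ pM * (f pM / (1 - F pM)) := this
            calc f x * x = x * (f x / (1 - F x)) * (1 - F x) := by field_simp
              _ ≤ pM * (f pM / (1 - F pM)) * (1 - F x) := by
                  apply mul_le_mul_of_nonneg_right this2 hFx.le
              _ = 1 - F x := by rw [hFOC]; ring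
          have h2 : f x * (x - R) ≤ f x * x := by
            apply mul_le_mul_of_nonneg_left _ (hfpos x hx0).le
            linarith
          nlinarith
      have hstep1 : (1 - F p) * (p - R) ≤ (1 - F pM) * (pM - R) :=
        hmono ⟨hp, hppM⟩ ⟨hpM.le, le_rfl⟩ hppM
      have hstep2 : (1 - F pM) * (pM - R) ≤ pM * (1 - F pM) * Real.exp (-R * hM) := by
        have he : 1 + (-R * hM) ≤ Real.exp (-R * hM) := by
          have := Real.add_one_le_exp (-R * hM)
          linarith
        have hFpM := hFpos pM hpM0
        have : pM * (1 - F pM) * (1 + (-R * hM)) ≤ pM * (1 - F pM) * Real.exp (-R * hM) := by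
          apply mul_le_mul_of_nonneg_left he
          positivity
        calc (1 - F pM) * (pM - R) = pM * (1 - F pM) * (1 + (-R * hM)) := by
              have hy : pM * hM = 1 := hFOC
              linear_combination R * (1 - F pM) * hy
          _ ≤ pM * (1 - F pM) * Real.exp (-R * hM) := this
      linarith
    · -- case p > pM
      rw [hS2 p hppM.le]
      have hFpM := hFpos pM hpM0
      rcases le_or_gt p R with hpR | hpR
      · -- p - R ≤ 0
        have : (1 - F pM) * Real.exp (-(hM * (p - pM))) * (p - R) ≤ 0 := by
          apply mul_nonpos_of_nonneg_of_nonpos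
          · positivity
          · linarith
        have : (0:ℝ) ≤ pM * (1 - F pM) * Real.exp (-R * hM) := by positivity
        linarith [mul_nonpos_of_nonneg_of_nonpos
          (by positivity : (0:ℝ) ≤ (1 - F pM) * Real.exp (-(hM * (p - pM)))) (by linarith : p - R ≤ 0)]
      · -- p > R : reduce to s e^{1-s} ≤ 1 with s = hM (p - R)
        set s : ℝ := hM * (p - R) with hs
        have hspos : 0 < s := mul_pos hMpos (by linarith)
        have hkey : s * Real.exp (1 - s) ≤ 1 := by
          have h1 : s ≤ Real.exp (s - 1) := by
            have := Real.add_one_le_exp (s - 1)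
            linarith
          have h2 : s * Real.exp (1 - s) ≤ Real.exp (s - 1) * Real.exp (1 - s) := by
            apply mul_le_mul_of_nonneg_right h1 (Real.exp_pos _).le
          rw [← Real.exp_add] at h2
          simpa using h2
        -- expand: need exp(-(hM(p-pM)))(p-R) ≤ pM exp(-R hM)
        have hexp : Real.exp (-(hM * (p - pM))) * (p - R)
            ≤ pM * Real.exp (-R * hM) := by
          have hpMhM : pM * hM = 1 := hFOC
          have e1 : Real.exp (-(hM * (p - pM))) = Real.exp (-R * hM) * Real.exp (1 - s) := by
            rw [← Real.exp_add]
            congr 1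
            rw [hs]
            nlinarith [hpMhM]
          rw [e1]
          have e2 : p - R = s / hM := by
            rw [hs]; field_simp
          rw [e2]
          have : Real.exp (-R * hM) * Real.exp (1 - s) * (s / hM)
              = (Real.exp (-R * hM) / hM) * (s * Real.exp (1 - s)) := by ring
          rw [this]
          have : pM * Real.exp (-R * hM) = (Real.exp (-R * hM) / hM) * 1 := by
            field_simp
            linear_combination hFOC
          rw [this]
          apply mul_le_mul_of_nonneg_left hkey
          positivity
        calc (1 - F pM) * Real.exp (-(hM * (p - pM))) * (p - R)
            = (1 - F pM) * (Real.exp (-(hM * (p - pM))) * (p - R)) := by ring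
          _ ≤ (1 - F pM) * (pM * Real.exp (-R * hM)) := by
              apply mul_le_mul_of_nonneg_left hexp hFpM.le
          _ = pM * (1 - F pM) * Real.exp (-R * hM) := by ring
  · exact hval
end

section
/- Let F : [0, ∞) → ℝ be continuously differentiable with derivative f > 0, F(0) = 0, F < 1, with nondecreasing hazard rate h(z) = f(z)/(1 − F(z)). Suppose the Myerson revenue R_M = sup_{p ≥ 0} p(1 − F(p)) is finite, positive, and attained at some p_M > 0 satisfying p_M h(p_M) = 1, and set γ = 1/(e · R_M). Then for every outside option R ≥ 0, the optimal incremental revenue satisfies sup_{p ≥ 0} (1 − F(p))(p − R) ≤ (1/(eγ)) · e^{−γR}. -/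
/-- Exponential domination: for an MHR distribution with Myerson revenue `R_M`,
setting `γ = 1/(e R_M)`, the optimal incremental revenue over any outside
option `R ≥ 0` is at most `(1/(eγ)) e^{-γ R}`. -/
theorem stmt_7 (F f : ℝ → ℝ)
    (hderiv : ∀ z ∈ Set.Ici (0:ℝ), HasDerivAt F (f z) z)
    (hcont : ContinuousOn f (Set.Ici 0))
    (hfpos : ∀ z ∈ Set.Ici (0:ℝ), 0 < f z)
    (hF0 : F 0 = 0)
    (hF1 : ∀ z ∈ Set.Ici (0:ℝ), F z < 1)
    (hMHR : ∀ x ∈ Set.Ici (0:ℝ), ∀ y ∈ Set.Ici (0:ℝ), x ≤ y →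
      f x / (1 - F x) ≤ f y / (1 - F y))
    (pM RM : ℝ) (hpM : 0 < pM) (hRMpos : 0 < RM)
    (hRMdef : RM = pM * (1 - F pM))
    (hRMmax : IsMaxOn (fun p => p * (1 - F p)) (Set.Ici 0) pM)
    (hFOC : pM * (f pM / (1 - F pM)) = 1)
    (γ : ℝ) (hγ : γ = 1 / (Real.exp 1 * RM)) :
    ∀ R ∈ Set.Ici (0:ℝ),
      sSup ((fun p => (1 - F p) * (p - R)) '' Set.Ici 0) ≤
        1 / (Real.exp 1 * γ) * Real.exp (-γ * R) := by
  intro R hR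
  have hR0 : (0:ℝ) ≤ R := hR
  have Gpos : ∀ z ∈ Set.Ici (0:ℝ), 0 < 1 - F z := fun z hz => by linarith [hF1 z hz]
  have hGpM : 0 < 1 - F pM := Gpos pM hpM.le
  have hhpM : f pM / (1 - F pM) = 1 / pM := by
    have hne : (1 - F pM) ≠ 0 := hGpM.ne'
    field_simp [hne] at hFOC
    rw [div_eq_div_iff hGpM.ne' hpM.ne']
    linear_combination hFOC
  -- the auxiliary function
  set φ : ℝ → ℝ := fun z => Real.log (1 - F z) + z / pM with hφ
  have hφderiv : ∀ z ∈ Set.Ici (0:ℝ),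
      HasDerivAt φ (-f z / (1 - F z) + 1 / pM) z := by
    intro z hz
    have h1 : HasDerivAt (fun z => 1 - F z) (-f z) z := (hderiv z hz).const_sub 1
    have h2 : HasDerivAt (fun z => Real.log (1 - F z)) (-f z / (1 - F z)) z :=
      h1.log (Gpos z hz).ne'
    exact h2.add ((hasDerivAt_id z).div_const pM)
  -- monotone on [0, pM]
  have hmono : MonotoneOn φ (Set.Icc 0 pM) := by
    apply monotoneOn_of_deriv_nonneg (convex_Icc 0 pM)
    · intro z hz
      exact ((hφderiv z hz.1).continuousAt).continuousWithinAt
    · intro z hz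
      rw [interior_Icc] at hz
      exact ((hφderiv z hz.1.le).differentiableAt).differentiableWithinAt
    · intro z hz
      rw [interior_Icc] at hz
      rw [(hφderiv z hz.1.le).deriv]
      have hle := hMHR z hz.1.le pM hpM.le hz.2.le
      rw [hhpM] at hle
      have hGz := Gpos z hz.1.le
      have : -f z / (1 - F z) = -(f z / (1 - F z)) := by ring
      rw [this]
      linarith
  -- antitone on [pM, ∞)
  have hanti : AntitoneOn φ (Set.Ici pM) := by
    apply antitoneOn_of_deriv_nonpos (convex_Ici pM)
    · intro z hz
      exact ((hφderiv z (hpM.le.trans hz)).continuousAt).continuousWithinAt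
    · intro z hz
      rw [interior_Ici] at hz
      exact ((hφderiv z (hpM.le.trans hz.le)).differentiableAt).differentiableWithinAt
    · intro z hz
      rw [interior_Ici] at hz
      rw [(hφderiv z (hpM.le.trans hz.le)).deriv]
      have hle := hMHR pM hpM.le z (hpM.le.trans hz.le) hz.le
      rw [hhpM] at hle
      have : -f z / (1 - F z) = -(f z / (1 - F z)) := by ring
      rw [this]
      linarith
  -- survival at pM is at least e⁻¹
  have hφ0 : φ 0 = 0 := by simp [hφ, hF0]
  have hGpM_ge : Real.exp (-1) ≤ 1 - F pM := by
    have h01 := hmono (Set.left_mem_Icc.2 hpM.le) (Set.right_mem_Icc.2 hpM.le) hpM.le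
    rw [hφ0] at h01
    have hlog : -1 ≤ Real.log (1 - F pM) := by
      have : pM / pM = 1 := div_self hpM.ne'
      simp only [hφ] at h01
      rw [this] at h01
      linarith
    calc Real.exp (-1) ≤ Real.exp (Real.log (1 - F pM)) := Real.exp_le_exp.2 hlog
      _ = 1 - F pM := Real.exp_log hGpM
  have hpMle : pM ≤ Real.exp 1 * RM := by
    have he : Real.exp 1 * Real.exp (-1) = 1 := by
      rw [← Real.exp_add]; norm_num
    have h1 : Real.exp 1 * pM * Real.exp (-1) = pM := by
      rw [mul_comm (Real.exp 1) pM, mul_assoc, he, mul_one]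
    have h2 : Real.exp 1 * pM * Real.exp (-1) ≤ Real.exp 1 * pM * (1 - F pM) :=
      mul_le_mul_of_nonneg_left hGpM_ge (by positivity)
    have h3 : Real.exp 1 * RM = Real.exp 1 * pM * (1 - F pM) := by rw [hRMdef]; ring
    linarith
  -- tail bound for p ≥ pM
  have htail : ∀ p, pM ≤ p → 1 - F p ≤ (1 - F pM) * Real.exp (1 - p / pM) := by
    intro p hp
    have hp0 : (0:ℝ) ≤ p := hpM.le.trans hp
    have h := hanti (Set.self_mem_Ici) hp hp
    simp only [hφ] at h
    have hpp : pM / pM = 1 := div_self hpM.ne'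
    rw [hpp] at h
    have hlog : Real.log (1 - F p) ≤ Real.log (1 - F pM) + (1 - p / pM) := by linarith
    calc 1 - F p = Real.exp (Real.log (1 - F p)) := (Real.exp_log (Gpos p hp0)).symm
      _ ≤ Real.exp (Real.log (1 - F pM) + (1 - p / pM)) := Real.exp_le_exp.2 hlog
      _ = (1 - F pM) * Real.exp (1 - p / pM) := by
          rw [Real.exp_add, Real.exp_log hGpM]
  -- revenue function monotone on [0, pM]
  have humono : MonotoneOn (fun p => (1 - F p) * (p - R)) (Set.Icc 0 pM) := by
    apply monotoneOn_of_deriv_nonneg (convex_Icc 0 pM)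
    · intro z hz
      exact (((hderiv z hz.1).const_sub 1).mul
        ((hasDerivAt_id z).sub_const R)).continuousAt.continuousWithinAt
    · intro z hz
      rw [interior_Icc] at hz
      exact (((hderiv z hz.1.le).const_sub 1).mul
        ((hasDerivAt_id z).sub_const R)).differentiableAt.differentiableWithinAt
    · intro z hz
      rw [interior_Icc] at hz
      have hd : HasDerivAt (fun p => (1 - F p) * (p - R))
          (-f z * (z - R) + (1 - F z) * 1) z :=
        ((hderiv z hz.1.le).const_sub 1).mul ((hasDerivAt_id z).sub_const R)
      rw [hd.deriv]
      have hle := hMHR z hz.1.le pM hpM.le hz.2.le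
      rw [hhpM] at hle
      have hGz := Gpos z hz.1.le
      have hfz := hfpos z hz.1.le
      -- f z ≤ (1 - F z)/pM, so z f z ≤ (1 - F z), so (z-R) f z ≤ 1-F z
      have h1 : f z * pM ≤ 1 - F z := by
        rw [div_le_div_iff₀ hGz hpM] at hle
        linarith
      nlinarith [hz.1.le, hz.2.le]
  -- key bound at pM
  have hkey : ∀ p ∈ Set.Ici (0:ℝ),
      (1 - F p) * (p - R) ≤ RM * Real.exp (-R / pM) := by
    intro p hp
    have hexp_pos : 0 < Real.exp (-R / pM) := Real.exp_pos _
    rcases le_total p pM with hple | hpge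
    · have h1 : (1 - F p) * (p - R) ≤ (1 - F pM) * (pM - R) :=
        humono ⟨hp, hple⟩ (Set.right_mem_Icc.2 hpM.le) hple
      have h2 : pM - R ≤ pM * Real.exp (-R / pM) := by
        have h := mul_le_mul_of_nonneg_left (Real.add_one_le_exp (-R / pM)) hpM.le
        have heq : pM * (-R / pM + 1) = pM - R := by field_simp; ring
        linarith
      calc (1 - F p) * (p - R) ≤ (1 - F pM) * (pM - R) := h1
        _ ≤ (1 - F pM) * (pM * Real.exp (-R / pM)) := by nlinarith
        _ = RM * Real.exp (-R / pM) := by rw [hRMdef]; ring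
    · rcases le_total p R with hpR | hRp
      · have hGp := Gpos p hp
        have : (1 - F p) * (p - R) ≤ 0 := mul_nonpos_of_nonneg_of_nonpos hGp.le (by linarith)
        nlinarith
      · have h1 : (1 - F p) * (p - R) ≤ ((1 - F pM) * Real.exp (1 - p / pM)) * (p - R) :=
          mul_le_mul_of_nonneg_right (htail p hpge) (by linarith)
        have h2 : p - R ≤ pM * Real.exp ((p - R - pM) / pM) := by
          have := Real.add_one_le_exp ((p - R - pM) / pM)
          have heq : (p - R - pM) / pM + 1 = (p - R) / pM := by field_simp; ring
          rw [heq] at this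
          have := mul_le_mul_of_nonneg_left this hpM.le
          rw [mul_div_cancel₀ _ hpM.ne'] at this
          linarith
        have h3 : Real.exp (1 - p / pM) * (pM * Real.exp ((p - R - pM) / pM)) =
            pM * Real.exp (-R / pM) := by
          have heq : -R / pM = (1 - p / pM) + (p - R - pM) / pM := by
            field_simp
            ring
          rw [heq, Real.exp_add]
          ring
        calc (1 - F p) * (p - R)
            ≤ ((1 - F pM) * Real.exp (1 - p / pM)) * (p - R) := h1
          _ ≤ ((1 - F pM) * Real.exp (1 - p / pM)) * (pM * Real.exp ((p - R - pM) / pM)) := by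
              apply mul_le_mul_of_nonneg_left h2
              positivity
          _ = (1 - F pM) * (pM * Real.exp (-R / pM)) := by rw [mul_assoc, h3]
          _ = RM * Real.exp (-R / pM) := by rw [hRMdef]; ring
  -- γ ≤ 1/pM
  have hγpos : 0 < γ := by
    rw [hγ]; positivity
  have hγle : γ ≤ 1 / pM := by
    rw [hγ]
    exact one_div_le_one_div_of_le hpM hpMle
  have hRHS : 1 / (Real.exp 1 * γ) * Real.exp (-γ * R) = RM * Real.exp (-γ * R) := by
    rw [hγ]
    have hE := Real.exp_pos (1:ℝ)
    field_simp
  have hfinal : RM * Real.exp (-R / pM) ≤ RM * Real.exp (-γ * R) := by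
    apply mul_le_mul_of_nonneg_left _ hRMpos.le
    apply Real.exp_le_exp.2
    have h := mul_le_mul_of_nonneg_left hγle hR0
    have heq : R * (1 / pM) = R / pM := by ring
    have hgoal : γ * R ≤ R / pM := by rw [← heq, mul_comm γ R]; exact h
    rw [neg_div, neg_mul]
    exact neg_le_neg hgoal
  rw [hRHS]
  apply Real.sSup_le
  · rintro x ⟨p, hp, rfl⟩
    exact (hkey p hp).trans hfinal
  · positivity
end

section
/- Let γ > 0 and let (a_k)_{k ≥ 1} be a sequence of nonnegative reals satisfying a_1 ≤ 1/(eγ) and a_k ≤ a_{k−1} + (1/(eγ)) · e^{−γ a_{k−1}} for all k ≥ 2. Then a_k ≤ (ln k)/γ for all k ≥ 2. -/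
/-- The induction at the heart of the single-item approximation theorem:
if `a₁ ≤ 1/(eγ)` and `a_k ≤ a_{k-1} + (1/(eγ)) e^{-γ a_{k-1}}`,
then `a_k ≤ (ln k)/γ` for all `k ≥ 2`. -/
theorem stmt_8 (γ : ℝ) (hγ : 0 < γ) (a : ℕ → ℝ) (ha : ∀ k, 0 ≤ a k)
    (h1 : a 1 ≤ 1 / (Real.exp 1 * γ))
    (hrec : ∀ k, 2 ≤ k →
      a k ≤ a (k - 1) + 1 / (Real.exp 1 * γ) * Real.exp (-γ * a (k - 1))) :
    ∀ k, 2 ≤ k → a k ≤ Real.log k / γ := by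
  have he : (0:ℝ) < Real.exp 1 := Real.exp_pos 1
  have he1 : (2.7182818283 : ℝ) < Real.exp 1 := Real.exp_one_gt_d9
  set c := 1 / (Real.exp 1 * γ) with hc
  have hcpos : 0 < c := by positivity
  have hcγ : c * γ = 1 / Real.exp 1 := by rw [hc]; field_simp
  -- monotonicity of x ↦ x + c e^{-γ x} on [0, ∞)
  have mono : ∀ x y : ℝ, 0 ≤ x → x ≤ y →
      x + c * Real.exp (-γ * x) ≤ y + c * Real.exp (-γ * y) := by
    intro x y hx hxy
    have hEq : Real.exp (-γ * x) - Real.exp (-γ * y)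
        = Real.exp (-γ * x) * (1 - Real.exp (-γ * (y - x))) := by
      rw [mul_sub, mul_one, ← Real.exp_add]; ring_nf
    have h2 : 1 - Real.exp (-γ * (y - x)) ≤ γ * (y - x) := by
      have := Real.add_one_le_exp (-γ * (y - x)); linarith
    have h2' : 0 ≤ 1 - Real.exp (-γ * (y - x)) := by
      have : Real.exp (-γ * (y - x)) ≤ 1 := by
        rw [Real.exp_le_one_iff]
        nlinarith
      linarith
    have h3 : Real.exp (-γ * x) ≤ 1 := by
      rw [Real.exp_le_one_iff]; nlinarith
    have h4 : Real.exp (-γ * x) - Real.exp (-γ * y) ≤ γ * (y - x) := by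
      rw [hEq]
      calc Real.exp (-γ * x) * (1 - Real.exp (-γ * (y - x)))
          ≤ 1 * (γ * (y - x)) := by
            apply mul_le_mul h3 h2 h2' (by norm_num)
        _ = γ * (y - x) := one_mul _
    have h5 : c * (Real.exp (-γ * x) - Real.exp (-γ * y)) ≤ c * (γ * (y - x)) :=
      mul_le_mul_of_nonneg_left h4 hcpos.le
    have h6 : c * (γ * (y - x)) ≤ y - x := by
      have : c * (γ * (y - x)) = (1 / Real.exp 1) * (y - x) := by
        rw [← mul_assoc, hcγ]
      rw [this]
      have hle1 : (1 / Real.exp 1 : ℝ) ≤ 1 := by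
        rw [div_le_one he]; nlinarith
      nlinarith
    nlinarith [h5, h6]
  -- base case: a 2 ≤ log 2 / γ
  have base : a 2 ≤ Real.log 2 / γ := by
    have h0 := hrec 2 le_rfl
    simp only [show (2:ℕ) - 1 = 1 from rfl] at h0
    have step1 : a 1 + c * Real.exp (-γ * a 1) ≤ c + c * Real.exp (-γ * c) :=
      mono (a 1) c (ha 1) h1
    have hγc : -γ * c = -(1 / Real.exp 1) := by
      rw [hc]; field_simp
    have hbound : Real.exp (-(1 / Real.exp 1)) ≤ Real.exp 1 / (Real.exp 1 + 1) := by
      have h := Real.add_one_le_exp (1 / Real.exp 1)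
      have hpos : (0:ℝ) < (Real.exp 1 + 1) / Real.exp 1 := by positivity
      have hle : (Real.exp 1 + 1) / Real.exp 1 ≤ Real.exp (1 / Real.exp 1) := by
        have heq : (Real.exp 1 + 1) / Real.exp 1 = 1 / Real.exp 1 + 1 := by
          field_simp; ring
        linarith [heq ▸ h]
      have hinv := inv_anti₀ hpos hle
      rw [Real.exp_neg]
      calc (Real.exp (1 / Real.exp 1))⁻¹ ≤ ((Real.exp 1 + 1) / Real.exp 1)⁻¹ := hinv
        _ = Real.exp 1 / (Real.exp 1 + 1) := by rw [inv_div]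
    have hlog2 : (0.6931471803 : ℝ) < Real.log 2 := Real.log_two_gt_d9
    have key : c + c * Real.exp (-γ * c) ≤ Real.log 2 / γ := by
      rw [hγc]
      have : c + c * Real.exp (-(1 / Real.exp 1))
          ≤ c * (1 + Real.exp 1 / (Real.exp 1 + 1)) := by nlinarith
      refine this.trans ?_
      have key2 : (2 * Real.exp 1 + 1) / (Real.exp 1 * (Real.exp 1 + 1))
          ≤ Real.log 2 := by
        rw [div_le_iff₀ (by positivity)]
        nlinarith [he1, hlog2, sq_nonneg (Real.exp 1 - 2.7182818283)]
      have heq2 : c * (1 + Real.exp 1 / (Real.exp 1 + 1))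
          = ((2 * Real.exp 1 + 1) / (Real.exp 1 * (Real.exp 1 + 1))) / γ := by
        rw [hc]; field_simp; ring
      rw [heq2]
      gcongr
    linarith [h0, step1, key]
  -- induction
  intro k hk
  induction k, hk using Nat.le_induction with
  | base => exact base
  | succ n hn ih =>
    have hn1 : (1:ℝ) ≤ (n:ℝ) := by exact_mod_cast Nat.one_le_of_lt hn
    have hnpos : (0:ℝ) < (n:ℝ) := by linarith
    have hlogn : 0 ≤ Real.log n := Real.log_nonneg hn1
    have h0 := hrec (n+1) (by omega)
    simp only [Nat.add_sub_cancel] at h0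
    have step1 : a n + c * Real.exp (-γ * a n)
        ≤ Real.log n / γ + c * Real.exp (-γ * (Real.log n / γ)) :=
      mono (a n) (Real.log n / γ) (ha n) ih
    have hexp : Real.exp (-γ * (Real.log n / γ)) = 1 / (n:ℝ) := by
      have : -γ * (Real.log n / γ) = -Real.log n := by field_simp
      rw [this, Real.exp_neg, Real.exp_log hnpos, one_div]
    have hlogdiff : 1 / ((n:ℝ) + 1) ≤ Real.log (n+1) - Real.log n := by
      have hq : (0:ℝ) < (n:ℝ) / ((n:ℝ) + 1) := by positivity
      have h := Real.log_le_sub_one_of_pos hq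
      have hlq : Real.log ((n:ℝ) / ((n:ℝ)+1)) = Real.log n - Real.log (n+1) := by
        rw [Real.log_div (by positivity) (by positivity)]
      rw [hlq] at h
      have : (n:ℝ) / ((n:ℝ)+1) - 1 = -(1 / ((n:ℝ)+1)) := by field_simp; ring
      linarith [h.trans_eq this]
    have hkey : Real.log n / γ + c * (1 / (n:ℝ)) ≤ Real.log ((n:ℝ)+1) / γ := by
      have hc1 : c * (1 / (n:ℝ)) = 1 / (Real.exp 1 * γ * n) := by
        rw [hc]; field_simp
      have h2 : 1 / (Real.exp 1 * γ * n) ≤ (1 / ((n:ℝ)+1)) / γ := by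
        rw [div_div]
        apply one_div_le_one_div_of_le (by positivity)
        have hen : (n:ℝ) + 1 ≤ Real.exp 1 * n := by nlinarith
        nlinarith
      rw [hc1]
      have h3 : (1 / ((n:ℝ)+1)) / γ ≤ (Real.log ((n:ℝ)+1) - Real.log n) / γ := by
        gcongr
      have h4 : (Real.log ((n:ℝ)+1) - Real.log n) / γ
          = Real.log ((n:ℝ)+1) / γ - Real.log n / γ := by ring
      linarith [h2, h3.trans_eq h4]
    have : a (n+1) ≤ Real.log ((n:ℝ)+1) / γ := by
      rw [hexp] at step1
      linarith [h0, step1, hkey]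
    push_cast
    exact this
end

section
/- For i = 1, …, n (with n ≥ 2), let F_i : [0, ∞) → ℝ be continuously differentiable with density f_i > 0, F_i(0) = 0, F_i < 1, with nondecreasing hazard rate, and suppose each Myerson revenue R_M^i = sup_{p ≥ 0} p(1 − F_i(p)) is finite, positive, and attained at a price satisfying the first-order condition. Define G_i(R) = sup_{p ≥ 0} [(1 − F_i(p)) p + F_i(p) R] for R ≥ 0. For any ordering (i_1, …, i_n) of the items, define the optimal cascade revenue by R_0 = 0 and R_k = G_{i_k}(R_{k−1}) for k = 1, …, n. Then R_n ≤ (e · ln n) · max_i R_M^i. -/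
private lemma stmt9_mono_aux (g g' : ℝ → ℝ) (a b : ℝ) (hab : a ≤ b)
    (hg : ∀ z ∈ Set.Icc a b, HasDerivAt g (g' z) z)
    (h0 : ∀ z ∈ Set.Icc a b, 0 ≤ g' z) : g a ≤ g b := by
  have H := monotoneOn_of_deriv_nonneg (convex_Icc a b)
    (fun x hx => (hg x hx).continuousAt.continuousWithinAt)
    (fun x hx => ((hg x (interior_subset hx)).differentiableAt).differentiableWithinAt)
    (fun x hx => by rw [(hg x (interior_subset hx)).deriv]; exact h0 x (interior_subset hx))
  exact H (Set.left_mem_Icc.mpr hab) (Set.right_mem_Icc.mpr hab) hab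

private lemma stmt9_anti_aux (g g' : ℝ → ℝ) (a b : ℝ) (hab : a ≤ b)
    (hg : ∀ z ∈ Set.Icc a b, HasDerivAt g (g' z) z)
    (h0 : ∀ z ∈ Set.Icc a b, g' z ≤ 0) : g b ≤ g a := by
  have := stmt9_mono_aux (fun z => -g z) (fun z => -g' z) a b hab
    (fun z hz => (hg z hz).neg) (fun z hz => neg_nonneg.mpr (h0 z hz))
  linarith

private lemma stmt9_qexp (q c : ℝ) (hq : 0 ≤ q) (hc : 0 < c) :
    q * Real.exp (-(q/c)) ≤ c / Real.exp 1 := by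
  have h := Real.add_one_le_exp (q/c - 1)
  have he : (0:ℝ) < Real.exp (-(q/c)) := Real.exp_pos _
  have h1 : q / c ≤ Real.exp (q/c - 1) := by linarith
  have h2 : q ≤ c * Real.exp (q/c - 1) := by
    rw [div_le_iff₀ hc] at h1; linarith
  have h3 : q * Real.exp (-(q/c)) ≤ c * Real.exp (q/c - 1) * Real.exp (-(q/c)) :=
    mul_le_mul_of_nonneg_right h2 he.le
  have h4 : c * Real.exp (q/c - 1) * Real.exp (-(q/c)) = c / Real.exp 1 := by
    rw [mul_assoc, ← Real.exp_add]
    have : q/c - 1 + -(q/c) = -1 := by ring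
    rw [this, Real.exp_neg, div_eq_mul_inv]
  linarith

private lemma stmt9_chord (t : ℝ) (h0 : 0 ≤ t) (h1 : t ≤ 1/Real.exp 1) :
    Real.exp t ≤ 1 + (Real.exp (1/Real.exp 1) - 1) * (Real.exp 1 * t) := by
  have hE : (0:ℝ) < Real.exp 1 := Real.exp_pos 1
  have hs0 : 0 ≤ Real.exp 1 * t := by positivity
  have hs1 : Real.exp 1 * t ≤ 1 := by
    rw [← le_div_iff₀' hE]; exact h1
  have hconv := convexOn_exp.2 (Set.mem_univ (0:ℝ)) (Set.mem_univ (1/Real.exp 1))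
    (by linarith : 0 ≤ 1 - Real.exp 1 * t) hs0 (by ring)
  simp only [smul_eq_mul, mul_zero, zero_add, Real.exp_zero, mul_one] at hconv
  have harg : Real.exp 1 * t * (1/Real.exp 1) = t := by field_simp
  rw [harg] at hconv
  nlinarith [hconv]

private lemma stmt9_ystep (y : ℝ) (hy : 1 ≤ y) :
    y * Real.exp (1/(Real.exp 1 * y)) ≤ y + (Real.exp (1/Real.exp 1) - 1) := by
  have hE : (0:ℝ) < Real.exp 1 := Real.exp_pos 1
  have hy0 : 0 < y := by linarith
  have ht0 : (0:ℝ) ≤ 1/(Real.exp 1 * y) := by positivity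
  have ht1 : 1/(Real.exp 1 * y) ≤ 1/Real.exp 1 := by
    apply one_div_le_one_div_of_le hE
    nlinarith
  have h := stmt9_chord _ ht0 ht1
  have h2 : Real.exp 1 * (1/(Real.exp 1 * y)) = 1/y := by field_simp
  rw [h2] at h
  have h3 := mul_le_mul_of_nonneg_left h hy0.le
  have h4 : y * (1 + (Real.exp (1/Real.exp 1) - 1) * (1/y)) = y + (Real.exp (1/Real.exp 1) - 1) := by
    field_simp
  linarith

private lemma stmt9_exp_inv_e : Real.exp (1/Real.exp 1) ≤ 3/2 := by
  have hE : (2.7182818283:ℝ) < Real.exp 1 := Real.exp_one_gt_d9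
  have hEpos : (0:ℝ) < Real.exp 1 := Real.exp_pos 1
  set u := 1/(4*Real.exp 1) with hu
  have hu0 : 0 < u := by positivity
  have hu92 : u ≤ 0.092 := by
    rw [hu, div_le_iff₀ (by positivity)]; nlinarith
  have h1u : (0.908:ℝ) ≤ 1 - u := by linarith
  have hexpu : Real.exp u ≤ (1 - u)⁻¹ := by
    have h := Real.add_one_le_exp (-u)
    calc Real.exp u = (Real.exp (-u))⁻¹ := by rw [Real.exp_neg, inv_inv]
      _ ≤ (1-u)⁻¹ := by
          apply inv_anti₀ (by linarith) (by linarith)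
  have hval : Real.exp u ≤ 1.1014 := by
    calc Real.exp u ≤ (1-u)⁻¹ := hexpu
      _ ≤ (0.908:ℝ)⁻¹ := by apply inv_anti₀ (by norm_num) h1u
      _ ≤ 1.1014 := by norm_num
  have hsum : (1:ℝ)/Real.exp 1 = u + u + u + u := by
    rw [hu]; field_simp; ring
  have h0 := (Real.exp_pos u).le
  have h2 : Real.exp u * Real.exp u ≤ 1.1014*1.1014 :=
    mul_le_mul hval hval h0 (by norm_num)
  have h4 : (Real.exp u * Real.exp u) * (Real.exp u * Real.exp u) ≤ (1.1014*1.1014)*(1.1014*1.1014) :=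
    mul_le_mul h2 h2 (mul_nonneg h0 h0) (by norm_num)
  calc Real.exp (1/Real.exp 1) = (Real.exp u * Real.exp u) * (Real.exp u * Real.exp u) := by
        rw [hsum, Real.exp_add, Real.exp_add, Real.exp_add]; ring
    _ ≤ (1.1014*1.1014)*(1.1014*1.1014) := h4
    _ ≤ 3/2 := by norm_num
/-- The optimal cascade revenue over `n` items with independent MHR value
distributions is at most `e ln n` times the largest single-item Myerson
revenue. -/
theorem stmt_9 (n : ℕ) (hn : 2 ≤ n) (F f : Fin n → ℝ → ℝ)
    (hderiv : ∀ i, ∀ z ∈ Set.Ici (0:ℝ), HasDerivAt (F i) (f i z) z)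
    (hcont : ∀ i, ContinuousOn (f i) (Set.Ici 0))
    (hfpos : ∀ i, ∀ z ∈ Set.Ici (0:ℝ), 0 < f i z)
    (hF0 : ∀ i, F i 0 = 0)
    (hF1 : ∀ i, ∀ z ∈ Set.Ici (0:ℝ), F i z < 1)
    (hMHR : ∀ i, ∀ x ∈ Set.Ici (0:ℝ), ∀ y ∈ Set.Ici (0:ℝ), x ≤ y →
      f i x / (1 - F i x) ≤ f i y / (1 - F i y))
    (pM RM : Fin n → ℝ)
    (hpM : ∀ i, 0 < pM i)
    (hRMdef : ∀ i, RM i = pM i * (1 - F i (pM i)))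
    (hRMpos : ∀ i, 0 < RM i)
    (hRMmax : ∀ i, IsMaxOn (fun p => p * (1 - F i p)) (Set.Ici 0) (pM i))
    (hFOC : ∀ i, pM i * (f i (pM i) / (1 - F i (pM i))) = 1)
    (G : Fin n → ℝ → ℝ)
    (hG : ∀ i R, G i R = sSup ((fun p => (1 - F i p) * p + F i p * R) '' Set.Ici 0))
    (σ : Equiv.Perm (Fin n))
    (R : ℕ → ℝ) (hR0 : R 0 = 0)
    (hRk : ∀ k (hk : k < n), R (k + 1) = G (σ ⟨k, hk⟩) (R k)) :
    R n ≤ Real.exp 1 * Real.log n *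
      Finset.univ.sup' (Finset.univ_nonempty_iff.mpr ⟨⟨0, by omega⟩⟩) RM := by
  have hE1 : (0:ℝ) < Real.exp 1 := Real.exp_pos 1
  suffices h : ∀ M : ℝ, 0 < M → (∀ i, RM i ≤ M) → R n ≤ Real.exp 1 * Real.log n * M by
    exact h _ (lt_of_lt_of_le (hRMpos ⟨0, by omega⟩) (Finset.le_sup' RM (Finset.mem_univ _)))
      (fun i => Finset.le_sup' RM (Finset.mem_univ i))
  intro M hMpos hMi
  -- basic facts
  have hFsub : ∀ i p, 0 ≤ p → 0 < 1 - F i p := fun i p hp => by linarith [hF1 i p hp]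
  have hFmono : ∀ i p q, 0 ≤ p → p ≤ q → F i p ≤ F i q := fun i p q hp hpq =>
    stmt9_mono_aux (F i) (f i) p q hpq (fun z hz => hderiv i z (le_trans hp hz.1))
      (fun z hz => (hfpos i z (le_trans hp hz.1)).le)
  -- derivative of the log-survival potential
  have hL : ∀ i, ∀ z, 0 ≤ z → HasDerivAt
      (fun z => Real.log (1 - F i z) + z * (f i (pM i) / (1 - F i (pM i))))
      (-(f i z) / (1 - F i z) + f i (pM i) / (1 - F i (pM i))) z := by
    intro i z hz
    have h1 : HasDerivAt (fun z => 1 - F i z) (-(f i z)) z := (hderiv i z hz).const_sub 1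
    exact (h1.log (ne_of_gt (hFsub i z hz))).add (hasDerivAt_mul_const _)
  have claimA : ∀ i, -1 ≤ Real.log (1 - F i (pM i)) := by
    intro i
    have h := stmt9_mono_aux _ _ 0 (pM i) (hpM i).le (fun z hz => hL i z hz.1)
      (fun z hz => by
        have hm := hMHR i z hz.1 (pM i) (hpM i).le hz.2
        rw [neg_div]; linarith)
    simp only [hF0 i, sub_zero, Real.log_one, zero_mul, add_zero, zero_add] at h
    linarith [hFOC i]
  have claimB : ∀ i p, pM i ≤ p →
      1 - F i p ≤ (1 - F i (pM i)) *
        Real.exp (-((p - pM i) * (f i (pM i) / (1 - F i (pM i))))) := by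
    intro i p hp
    have h := stmt9_anti_aux _ _ (pM i) p hp (fun z hz => hL i z (le_trans (hpM i).le hz.1))
      (fun z hz => by
        have hm := hMHR i (pM i) (hpM i).le z (le_trans (hpM i).le hz.1) hz.1
        rw [neg_div]; linarith)
    have hp0 : (0:ℝ) ≤ p := le_trans (hpM i).le hp
    have hdp : 0 < 1 - F i p := hFsub i p hp0
    have hdM : 0 < 1 - F i (pM i) := hFsub i _ (hpM i).le
    calc 1 - F i p = Real.exp (Real.log (1 - F i p)) := (Real.exp_log hdp).symm
      _ ≤ Real.exp (Real.log (1 - F i (pM i)) +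
            -((p - pM i) * (f i (pM i) / (1 - F i (pM i))))) := by
          apply Real.exp_le_exp.mpr; nlinarith [h]
      _ = (1 - F i (pM i)) * Real.exp (-((p - pM i) * (f i (pM i) / (1 - F i (pM i))))) := by
          rw [Real.exp_add, Real.exp_log hdM]
  have claimC : ∀ i, pM i ≤ Real.exp 1 * RM i := by
    intro i
    have hA := claimA i
    have hden : 0 < 1 - F i (pM i) := hFsub i _ (hpM i).le
    have hel : Real.exp (-1) ≤ 1 - F i (pM i) := by
      rw [← Real.exp_log hden]; exact Real.exp_le_exp.mpr hA
    have h2 : pM i * Real.exp (-1) ≤ RM i := by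
      rw [hRMdef i]; exact mul_le_mul_of_nonneg_left hel (hpM i).le
    have h3 : pM i = pM i * Real.exp (-1) * Real.exp 1 := by
      rw [Real.exp_neg]; field_simp
    rw [h3]
    calc pM i * Real.exp (-1) * Real.exp 1 ≤ RM i * Real.exp 1 :=
          mul_le_mul_of_nonneg_right h2 hE1.le
      _ = Real.exp 1 * RM i := mul_comm _ _
  -- the key increment bound
  have keyΔ : ∀ i p R', 0 ≤ p → 0 ≤ R' →
      (1 - F i p) * (p - R') ≤ M * Real.exp (-(R' / (Real.exp 1 * M))) := by
    intro i p R' hp hR'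
    have hEM : (0:ℝ) < Real.exp 1 * M := by positivity
    have hB : (0:ℝ) < M * Real.exp (-(R' / (Real.exp 1 * M))) := by positivity
    rcases le_or_gt p R' with hpR | hpR
    · exact le_trans (mul_nonpos_of_nonneg_of_nonpos (hFsub i p hp).le (by linarith)) hB.le
    have hRMi := hRMpos i
    have hpMi := hpM i
    have hdM : 0 < 1 - F i (pM i) := hFsub i _ hpMi.le
    have hRMM := hMi i
    have hpMEM : pM i ≤ Real.exp 1 * M :=
      le_trans (claimC i) (mul_le_mul_of_nonneg_left hRMM hE1.le)
    have hmono_exp : Real.exp (-(R'/pM i)) ≤ Real.exp (-(R'/(Real.exp 1 * M))) := by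
      apply Real.exp_le_exp.mpr
      apply neg_le_neg
      gcongr
    rcases le_or_gt p (pM i) with hple | hpge
    · have h1 : p * (1 - F i p) ≤ pM i * (1 - F i (pM i)) :=
        hRMmax i (show p ∈ Set.Ici (0:ℝ) from hp)
      have h2 : 1 - F i (pM i) ≤ 1 - F i p := by
        have := hFmono i p (pM i) hp hple; linarith
      have h3 : (1 - F i (pM i)) * R' ≤ (1 - F i p) * R' :=
        mul_le_mul_of_nonneg_right h2 hR'
      have h4 : RM i - (1 - F i (pM i)) * R' = RM i * (1 - R'/(pM i)) := by
        rw [hRMdef i]; field_simp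
      have h5 : 1 - R'/(pM i) ≤ Real.exp (-(R'/(pM i))) := by
        have := Real.add_one_le_exp (-(R'/(pM i))); linarith
      calc (1 - F i p) * (p - R') ≤ RM i * (1 - R'/(pM i)) := by
            rw [← h4, hRMdef i]; nlinarith [h1, h3]
        _ ≤ RM i * Real.exp (-(R'/(pM i))) := mul_le_mul_of_nonneg_left h5 hRMi.le
        _ ≤ M * Real.exp (-(R'/(Real.exp 1 * M))) :=
            mul_le_mul hRMM hmono_exp (Real.exp_pos _).le (lt_of_lt_of_le hRMi hRMM).le
    · have hB2 := claimB i p hpge.le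
      have hq0 : (0:ℝ) ≤ p - R' := by linarith
      have hcval : f i (pM i)/(1 - F i (pM i)) = 1 / pM i := by
        rw [eq_div_iff (ne_of_gt hpMi), mul_comm]; exact hFOC i
      have hpe : -((p - pM i) * (1/pM i)) = 1 + -(R'/pM i) + -((p - R')/pM i) := by
        field_simp
        ring
      have hexp_split : Real.exp (-((p - pM i) * (1/pM i))) * (p - R')
          = Real.exp 1 * Real.exp (-(R'/pM i)) * ((p - R') * Real.exp (-((p - R')/pM i))) := by
        rw [hpe, Real.exp_add, Real.exp_add]; ring
      have h1 : (1 - F i p) * (p - R') ≤ (1 - F i (pM i)) *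
          (Real.exp 1 * Real.exp (-(R'/pM i)) * ((p - R') * Real.exp (-((p - R')/pM i)))) := by
        have h := mul_le_mul_of_nonneg_right hB2 hq0
        rw [hcval, mul_assoc, hexp_split] at h
        exact h
      have h2 : (p - R') * Real.exp (-((p - R')/pM i)) ≤ pM i / Real.exp 1 :=
        stmt9_qexp (p - R') (pM i) hq0 hpMi
      calc (1 - F i p) * (p - R')
          ≤ (1 - F i (pM i)) * (Real.exp 1 * Real.exp (-(R'/pM i)) *
              ((p - R') * Real.exp (-((p - R')/pM i)))) := h1
        _ ≤ (1 - F i (pM i)) * (Real.exp 1 * Real.exp (-(R'/pM i)) * (pM i / Real.exp 1)) := by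
            apply mul_le_mul_of_nonneg_left _ hdM.le
            exact mul_le_mul_of_nonneg_left h2 (by positivity)
        _ = RM i * Real.exp (-(R'/pM i)) := by
            rw [hRMdef i]; field_simp
        _ ≤ M * Real.exp (-(R'/(Real.exp 1 * M))) :=
            mul_le_mul hRMM hmono_exp (Real.exp_pos _).le (lt_of_lt_of_le hRMi hRMM).le
  -- bounds on G
  have hGle : ∀ i R', 0 ≤ R' → G i R' ≤ R' + M * Real.exp (-(R'/(Real.exp 1 * M))) := by
    intro i R' hR'
    rw [hG]
    apply Real.sSup_le
    · rintro x ⟨p, hp, rfl⟩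
      simp only
      linarith [keyΔ i p R' hp hR']
    · have : (0:ℝ) < M * Real.exp (-(R'/(Real.exp 1 * M))) := by positivity
      linarith
  have hGnn : ∀ i R', 0 ≤ R' → 0 ≤ G i R' := by
    intro i R' hR'
    rw [hG]
    apply le_csSup
    · refine ⟨R' + M * Real.exp (-(R'/(Real.exp 1 * M))), ?_⟩
      rintro x ⟨p, hp, rfl⟩
      simp only
      linarith [keyΔ i p R' hp hR']
    · exact ⟨0, Set.self_mem_Ici, by simp [hF0 i]⟩
  -- the induction
  have c0nn : 0 ≤ Real.exp (1/Real.exp 1) - 1 := by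
    have := Real.one_le_exp (by positivity : (0:ℝ) ≤ 1/Real.exp 1)
    linarith
  have inv : ∀ k, k ≤ n → 0 ≤ R k ∧
      Real.exp (R k/(Real.exp 1 * M)) ≤ 1 + k * (Real.exp (1/Real.exp 1) - 1) := by
    intro k
    induction k with
    | zero =>
      intro _
      constructor
      · rw [hR0]
      · rw [hR0]; norm_num
    | succ k ih =>
      intro hk1
      have hk : k < n := hk1
      obtain ⟨h0, hexp⟩ := ih (Nat.le_of_lt hk)
      have hEM : (0:ℝ) < Real.exp 1 * M := by positivity
      have hrec : R (k+1) = G (σ ⟨k, hk⟩) (R k) := hRk k hk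
      have hle : R (k+1) ≤ R k + M * Real.exp (-(R k/(Real.exp 1 * M))) := by
        rw [hrec]; exact hGle _ _ h0
      have hnn : 0 ≤ R (k+1) := by rw [hrec]; exact hGnn _ _ h0
      refine ⟨hnn, ?_⟩
      have hy1 : 1 ≤ Real.exp (R k/(Real.exp 1 * M)) :=
        Real.one_le_exp (by positivity)
      have hstep : Real.exp (R (k+1)/(Real.exp 1 * M)) ≤
          Real.exp (R k/(Real.exp 1 * M)) *
            Real.exp (1/(Real.exp 1 * Real.exp (R k/(Real.exp 1 * M)))) := by
        have heq : (R k + M * Real.exp (-(R k/(Real.exp 1 * M))))/(Real.exp 1 * M)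
            = R k/(Real.exp 1 * M) + Real.exp (-(R k/(Real.exp 1 * M)))/Real.exp 1 := by
          field_simp
        have h1 : R (k+1)/(Real.exp 1 * M) ≤
            R k/(Real.exp 1 * M) + Real.exp (-(R k/(Real.exp 1 * M)))/Real.exp 1 := by
          rw [← heq]
          gcongr
        calc Real.exp (R (k+1)/(Real.exp 1 * M))
            ≤ Real.exp (R k/(Real.exp 1 * M) + Real.exp (-(R k/(Real.exp 1 * M)))/Real.exp 1) :=
              Real.exp_le_exp.mpr h1
          _ = Real.exp (R k/(Real.exp 1 * M)) *
              Real.exp (1/(Real.exp 1 * Real.exp (R k/(Real.exp 1 * M)))) := by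
              have harg : Real.exp (-(R k/(Real.exp 1 * M)))/Real.exp 1
                  = 1/(Real.exp 1 * Real.exp (R k/(Real.exp 1 * M))) := by
                rw [Real.exp_neg]
                field_simp
              rw [Real.exp_add, harg]
      have hyb := stmt9_ystep _ hy1
      calc Real.exp (R (k+1)/(Real.exp 1 * M))
          ≤ Real.exp (R k/(Real.exp 1 * M)) + (Real.exp (1/Real.exp 1) - 1) :=
            le_trans hstep hyb
        _ ≤ 1 + (k:ℝ) * (Real.exp (1/Real.exp 1) - 1) + (Real.exp (1/Real.exp 1) - 1) := by
            linarith
        _ = 1 + ((k:ℕ)+1 : ℝ) * (Real.exp (1/Real.exp 1) - 1) := by ring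
        _ = 1 + ((k+1 : ℕ) : ℝ) * (Real.exp (1/Real.exp 1) - 1) := by push_cast; ring
  -- conclusion
  obtain ⟨hnn, hexp⟩ := inv n le_rfl
  have hn2 : (2:ℝ) ≤ (n:ℝ) := by exact_mod_cast hn
  have hc0 : Real.exp (1/Real.exp 1) - 1 ≤ 1/2 := by linarith [stmt9_exp_inv_e]
  have hmul : (n:ℝ) * (Real.exp (1/Real.exp 1) - 1) ≤ (n:ℝ) * (1/2) :=
    mul_le_mul_of_nonneg_left hc0 (by linarith)
  have h1 : Real.exp (R n/(Real.exp 1 * M)) ≤ (n:ℝ) := by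
    linarith
  have hEM : (0:ℝ) < Real.exp 1 * M := by positivity
  have h2 : R n/(Real.exp 1 * M) ≤ Real.log n := by
    rw [Real.le_log_iff_exp_le (by linarith : (0:ℝ) < (n:ℝ))]
    exact h1
  rw [div_le_iff₀ hEM] at h2
  calc R n ≤ Real.log n * (Real.exp 1 * M) := h2
    _ = Real.exp 1 * Real.log n * M := by ring
end

section
/- Let ι be a finite set and f a function on subsets of ι that is monotone (S ⊆ T implies f(S) ≤ f(T)), submodular (f(S ∪ T) + f(S ∩ T) ≤ f(S) + f(T)), and satisfies f(∅) = 0. Fix k ≥ 1 and construct S_0 = ∅ and, for j = 0, …, k−1, S_{j+1} = S_j ∪ {a_j}, where a_j ∈ ι maximizes f(S_j ∪ {a}) over all a ∈ ι. Then f(S_k) ≥ (1 − 1/e) · max{ f(T) : T ⊆ ι, |T| = k }. -/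
lemma submod_sum_bound {ι : Type*} [DecidableEq ι]
    (f : Finset ι → ℝ)
    (hsub : ∀ S T : Finset ι, f (S ∪ T) + f (S ∩ T) ≤ f S + f T)
    (A : Finset ι) : ∀ T : Finset ι,
    f (A ∪ T) ≤ f A + ∑ b ∈ T, (f (insert b A) - f A) := by
  intro T
  induction T using Finset.induction_on with
  | empty => simp
  | @insert b T hbT ih =>
      have hunion : insert b A ∪ (A ∪ T) = A ∪ insert b T := by
        ext x
        simp only [Finset.mem_insert, Finset.mem_union]
        tauto

      have hinter : insert b A ∩ (A ∪ T) = A := by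
        ext x
        simp only [Finset.mem_inter, Finset.mem_insert, Finset.mem_union]
        constructor
        · rintro ⟨hb | hA, h2⟩
          · rcases h2 with h | h
            · exact h
            · exact absurd (hb ▸ h) hbT
          · exact hA
        · intro h; exact ⟨Or.inr h, Or.inl h⟩
      have := hsub (insert b A) (A ∪ T)
      rw [hunion, hinter] at this
      rw [Finset.sum_insert hbT]
      linarith

/-- The greedy algorithm for maximizing a monotone submodular set function
with `f ∅ = 0` subject to a cardinality constraint `k` achieves a
`(1 - 1/e)` approximation. -/
theorem stmt_11 {ι : Type*} [Fintype ι] [DecidableEq ι]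
    (f : Finset ι → ℝ)
    (hmono : ∀ S T : Finset ι, S ⊆ T → f S ≤ f T)
    (hsub : ∀ S T : Finset ι, f (S ∪ T) + f (S ∩ T) ≤ f S + f T)
    (hf0 : f ∅ = 0)
    (k : ℕ) (hk : 1 ≤ k)
    (S : ℕ → Finset ι) (a : ℕ → ι)
    (hS0 : S 0 = ∅)
    (hgreedy : ∀ j < k, ∀ b : ι, f (insert b (S j)) ≤ f (insert (a j) (S j)))
    (hSsucc : ∀ j < k, S (j + 1) = insert (a j) (S j)) :
    ∀ T : Finset ι, T.card = k → (1 - 1 / Real.exp 1) * f T ≤ f (S k) := by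
  intro T hT
  have kpos : (0 : ℝ) < (k : ℝ) := by exact_mod_cast hk
  have hTnn : 0 ≤ f T := by
    have := hmono ∅ T (Finset.empty_subset T)
    linarith [this, hf0.ge]
  -- key step
  have hstep : ∀ j < k, f T - f (S (j + 1)) ≤ (1 - 1 / k) * (f T - f (S j)) := by
    intro j hj
    have h1 : f T ≤ f (S j ∪ T) := hmono T _ Finset.subset_union_right
    have h2 := submod_sum_bound f hsub (S j) T
    have h3 : ∑ b ∈ T, (f (insert b (S j)) - f (S j))
        ≤ ∑ _b ∈ T, (f (S (j + 1)) - f (S j)) := by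
      apply Finset.sum_le_sum
      intro b _
      have := hgreedy j hj b
      rw [hSsucc j hj]
      linarith
    have h4 : ∑ _b ∈ T, (f (S (j + 1)) - f (S j))
        = (k : ℝ) * (f (S (j + 1)) - f (S j)) := by
      rw [Finset.sum_const, hT]; ring
    have h5 : f T - f (S j) ≤ (k : ℝ) * (f (S (j + 1)) - f (S j)) := by
      rw [h4] at h3; linarith
    have hk0 : (k : ℝ) ≠ 0 := ne_of_gt kpos
    rw [sub_mul, one_mul, div_mul_eq_mul_div, sub_div' hk0] at *
    rw [sub_le_iff_le_add, div_add' _ _ _ hk0, le_div_iff₀ kpos]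
    nlinarith
  have hcoef : (0:ℝ) ≤ 1 - 1 / k := by
    have : (1:ℝ) ≤ (k:ℝ) := by exact_mod_cast hk
    have : 1 / (k:ℝ) ≤ 1 := by
      rw [div_le_one kpos]; exact this
    linarith
  have hiter : ∀ j, j ≤ k → f T - f (S j) ≤ (1 - 1 / k) ^ j * f T := by
    intro j
    induction j with
    | zero => intro _; simp [hS0, hf0]
    | succ j ih =>
        intro hjk
        have hj : j < k := hjk
        have := hstep j hj
        have ih' := ih (le_of_lt hj)
        calc f T - f (S (j + 1)) ≤ (1 - 1 / k) * (f T - f (S j)) := this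
          _ ≤ (1 - 1 / k) * ((1 - 1 / k) ^ j * f T) :=
              mul_le_mul_of_nonneg_left ih' hcoef
          _ = (1 - 1 / k) ^ (j + 1) * f T := by ring
  have hfinal := hiter k le_rfl
  have hexp : (1 - 1 / (k:ℝ)) ^ k ≤ 1 / Real.exp 1 := by
    have h1 : (1 - 1 / (k:ℝ)) ≤ Real.exp (-(1 / k)) := by
      have := Real.add_one_le_exp (-(1 / (k:ℝ)))
      linarith
    have h2 : (1 - 1 / (k:ℝ)) ^ k ≤ Real.exp (-(1 / k)) ^ k :=
      pow_le_pow_left₀ hcoef h1 k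
    have h3 : Real.exp (-(1 / (k:ℝ))) ^ k = Real.exp (-1) := by
      rw [← Real.exp_nat_mul]
      congr 1
      field_simp
    rw [h3, Real.exp_neg, ← one_div] at h2
    exact h2
  have : (1 - 1 / (k:ℝ)) ^ k * f T ≤ (1 / Real.exp 1) * f T :=
    mul_le_mul_of_nonneg_right hexp hTnn
  linarith
end

section
/- For i = 1, …, n, let F_i : [0, ∞) → ℝ be continuously differentiable with density f_i > 0, F_i(0) = 0, F_i < 1, with nondecreasing hazard rate, and suppose G_i(R) = sup_{p ≥ 0} [(1 − F_i(p)) p + F_i(p) R] is finite and attained for every R ≥ 0. For an ordering (i_1, …, i_n) of the items, define the optimal cascade revenue by R_0 = 0 and R_k = G_{i_k}(R_{k−1}) for k = 1, …, n, and write R(σ) = R_n for the ordering σ = (i_1, …, i_n). Then for any two orderings σ and τ of the same n items, R(σ) ≥ (1/2) · R(τ). In particular, for any fixed ordering, the optimal prices for that ordering generate at least half the revenue of the optimal cascade. -/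
/-- Any fixed ordering of the items, with optimal prices for that ordering,
generates at least half the revenue of the optimal cascade. -/
theorem stmt_14 (n : ℕ) (F f : Fin n → ℝ → ℝ)
    (hderiv : ∀ i, ∀ z ∈ Set.Ici (0:ℝ), HasDerivAt (F i) (f i z) z)
    (hcont : ∀ i, ContinuousOn (f i) (Set.Ici 0))
    (hfpos : ∀ i, ∀ z ∈ Set.Ici (0:ℝ), 0 < f i z)
    (hF0 : ∀ i, F i 0 = 0)
    (hF1 : ∀ i, ∀ z ∈ Set.Ici (0:ℝ), F i z < 1)
    (hMHR : ∀ i, ∀ x ∈ Set.Ici (0:ℝ), ∀ y ∈ Set.Ici (0:ℝ), x ≤ y →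
      f i x / (1 - F i x) ≤ f i y / (1 - F i y))
    (G : Fin n → ℝ → ℝ)
    (hG : ∀ i, ∀ R ∈ Set.Ici (0:ℝ),
      IsGreatest ((fun p => (1 - F i p) * p + F i p * R) '' Set.Ici 0) (G i R))
    (σ τ : Equiv.Perm (Fin n))
    (Rσ Rτ : ℕ → ℝ) (hRσ0 : Rσ 0 = 0) (hRτ0 : Rτ 0 = 0)
    (hRσ : ∀ k (hk : k < n), Rσ (k + 1) = G (σ ⟨k, hk⟩) (Rσ k))
    (hRτ : ∀ k (hk : k < n), Rτ (k + 1) = G (τ ⟨k, hk⟩) (Rτ k)) :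
    (1 / 2) * Rτ n ≤ Rσ n := by
  classical
  -- F is monotone on [0,∞), hence nonnegative there
  have hFmono : ∀ i, StrictMonoOn (F i) (Set.Ici 0) := by
    intro i
    apply strictMonoOn_of_deriv_pos (convex_Ici 0)
    · exact fun x hx => (hderiv i x hx).continuousAt.continuousWithinAt
    · intro x hx
      rw [interior_Ici] at hx
      rw [(hderiv i x (Set.mem_Ici.mpr (le_of_lt (Set.mem_Ioi.mp hx)))).deriv]
      exact hfpos i x (Set.mem_Ici.mpr (le_of_lt (Set.mem_Ioi.mp hx)))
  have hFnn : ∀ i, ∀ p : ℝ, 0 ≤ p → 0 ≤ F i p := by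
    intro i p hp
    rcases eq_or_lt_of_le hp with h | h
    · rw [← h, hF0]
    · have := hFmono i Set.self_mem_Ici (le_of_lt h : (0:ℝ) ≤ p) h
      rw [hF0] at this; exact le_of_lt this
  -- basic facts about G
  have hGub : ∀ i, ∀ R : ℝ, 0 ≤ R → ∀ p : ℝ, 0 ≤ p →
      (1 - F i p) * p + F i p * R ≤ G i R := by
    intro i R hR p hp
    exact (hG i R hR).2 ⟨p, hp, rfl⟩
  have hGmem : ∀ i, ∀ R : ℝ, 0 ≤ R → ∃ p : ℝ, 0 ≤ p ∧
      (1 - F i p) * p + F i p * R = G i R := by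
    intro i R hR
    obtain ⟨p, hp, hpe⟩ := (hG i R hR).1
    exact ⟨p, hp, hpe⟩
  have hGge : ∀ i, ∀ R : ℝ, 0 ≤ R → R ≤ G i R := by
    intro i R hR
    have h := hGub i R hR R hR
    have : (1 - F i R) * R + F i R * R = R := by ring
    linarith
  have hGmono : ∀ i, ∀ x y : ℝ, 0 ≤ x → x ≤ y → G i x ≤ G i y := by
    intro i x y hx hxy
    obtain ⟨p, hp, hpe⟩ := hGmem i x hx
    have h2 := hGub i y (hx.trans hxy) p hp
    have hF := hFnn i p hp
    nlinarith
  have hGlip : ∀ i, ∀ x y : ℝ, 0 ≤ x → x ≤ y → G i y ≤ G i x + (y - x) := by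
    intro i x y hx hxy
    obtain ⟨p, hp, hpe⟩ := hGmem i y (hx.trans hxy)
    have h2 := hGub i x hx p hp
    have hFle := le_of_lt (hF1 i p hp)
    nlinarith
  -- chain facts
  have hchainnn : ∀ (R : ℕ → ℝ) (π : Equiv.Perm (Fin n)), R 0 = 0 →
      (∀ k (hk : k < n), R (k + 1) = G (π ⟨k, hk⟩) (R k)) →
      ∀ k, k ≤ n → 0 ≤ R k := by
    intro R π h0 hrec k
    induction k with
    | zero => intro _; rw [h0]
    | succ k ih =>
      intro hk
      have hk' : k < n := hk
      have h1 := ih (le_of_lt hk')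
      rw [hrec k hk']
      exact h1.trans (hGge _ _ h1)
  have hchainmono : ∀ (R : ℕ → ℝ) (π : Equiv.Perm (Fin n)), R 0 = 0 →
      (∀ k (hk : k < n), R (k + 1) = G (π ⟨k, hk⟩) (R k)) →
      ∀ l k, l ≤ k → k ≤ n → R l ≤ R k := by
    intro R π h0 hrec l k hlk
    induction k with
    | zero =>
      intro _
      have hl0 : l = 0 := Nat.le_zero.mp hlk
      rw [hl0]
    | succ k ih =>
      intro hk
      rcases Nat.lt_or_ge l (k+1) with h | h
      · have h1 : l ≤ k := Nat.lt_succ_iff.mp h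
        have h2 := ih h1 (le_of_lt hk)
        have h3 : R k ≤ R (k+1) := by
          rw [hrec k hk]
          exact hGge _ _ (hchainnn R π h0 hrec k (le_of_lt hk))
        linarith
      · have : l = k + 1 := le_antisymm hlk h
        rw [this]
  have hσnn := hchainnn Rσ σ hRσ0 hRσ
  have hτnn := hchainnn Rτ τ hRτ0 hRτ
  have hσmono := hchainmono Rσ σ hRσ0 hRσ
  have hτmono := hchainmono Rτ τ hRτ0 hRτ
  set A := Rσ n with hA
  have hA0 : 0 ≤ A := hσnn n le_rfl
  -- A dominates each G i 0
  have hG0A : ∀ i : Fin n, G i 0 ≤ A := by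
    intro i
    set k : Fin n := σ.symm i with hk
    have hke : σ ⟨(k : ℕ), k.isLt⟩ = i := by
      rw [Fin.eta]; exact σ.apply_symm_apply i
    have h1 : Rσ ((k : ℕ) + 1) = G i (Rσ (k : ℕ)) := by
      rw [hRσ (k : ℕ) k.isLt, hke]
    have h2 : G i 0 ≤ G i (Rσ (k : ℕ)) :=
      hGmono i 0 _ le_rfl (hσnn (k : ℕ) (le_of_lt k.isLt))
    have h3 : Rσ ((k : ℕ) + 1) ≤ Rσ n := hσmono _ n k.isLt le_rfl
    linarith
  -- ∑ i, (G i A - A) ≤ A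
  have hsum : ∑ i : Fin n, (G i A - A) ≤ A := by
    have hterm : ∀ i : Fin n, G (σ i) A - A ≤ Rσ ((i : ℕ) + 1) - Rσ (i : ℕ) := by
      intro i
      have h1 : Rσ ((i : ℕ) + 1) = G (σ i) (Rσ (i : ℕ)) := by
        rw [hRσ (i : ℕ) i.isLt, Fin.eta]
      have h2 : G (σ i) A ≤ G (σ i) (Rσ (i : ℕ)) + (A - Rσ (i : ℕ)) :=
        hGlip (σ i) (Rσ (i : ℕ)) A (hσnn _ (le_of_lt i.isLt))
          (hσmono _ n (le_of_lt i.isLt) le_rfl)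
      linarith
    have h3 : ∑ i : Fin n, (G (σ i) A - A) ≤ ∑ i : Fin n, (Rσ ((i : ℕ) + 1) - Rσ (i : ℕ)) :=
      Finset.sum_le_sum fun i _ => hterm i
    have h4 : ∑ i : Fin n, (Rσ ((i : ℕ) + 1) - Rσ (i : ℕ)) = A := by
      rw [Fin.sum_univ_eq_sum_range (fun k => Rσ (k + 1) - Rσ k) n,
        Finset.sum_range_sub Rσ n, hRσ0, sub_zero]
    have h5 : ∑ i : Fin n, (G (σ i) A - A) = ∑ i : Fin n, (G i A - A) :=
      Equiv.sum_comp σ (fun i => G i A - A)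
    linarith
  -- main argument
  by_cases hc : Rτ n ≤ A
  · have := hτnn n le_rfl; linarith
  push_neg at hc
  set P : ℕ → Prop := fun k => Rτ k ≤ A with hP
  set m : ℕ := Nat.findGreatest P n with hm
  have hPm : P m := Nat.findGreatest_spec (Nat.zero_le n) (by simp [hP, hRτ0, hA0])
  have hmle : m ≤ n := Nat.findGreatest_le n
  have hmn : m < n := by
    rcases lt_or_eq_of_le hmle with h | h
    · exact h
    · exact absurd (h ▸ hPm) (not_le.mpr hc)
  have hgt : ∀ k, m < k → k ≤ n → A < Rτ k := by
    intro k h1 h2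
    exact lt_of_not_ge (Nat.findGreatest_is_greatest h1 h2)
  set j : Fin n := τ ⟨m, hmn⟩ with hj
  have hstep1 : Rτ (m + 1) ≤ G j A := by
    rw [hRτ m hmn]
    exact hGmono j (Rτ m) A (hτnn m (le_of_lt hmn)) hPm
  -- the tail sum
  set ψ : ℕ → ℝ := fun k => if hk : k < n then G (τ ⟨k, hk⟩) A - A else 0 with hψ
  have hψnn : ∀ k, 0 ≤ ψ k := by
    intro k
    simp only [hψ]
    split
    · have := hGge (τ ⟨k, ‹k < n›⟩) A hA0; linarith
    · exact le_rfl
  have htail : Rτ n - Rτ (m + 1) ≤ ∑ k ∈ Finset.Ico (m + 1) n, ψ k := by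
    have hts : ∑ k ∈ Finset.Ico (m + 1) n, (Rτ (k + 1) - Rτ k) = Rτ n - Rτ (m + 1) := by
      rw [Finset.sum_Ico_eq_sub _ hmn, Finset.sum_range_sub Rτ, Finset.sum_range_sub Rτ]
      ring
    rw [← hts]
    apply Finset.sum_le_sum
    intro k hk
    rw [Finset.mem_Ico] at hk
    have hkn : k < n := hk.2
    have hAk : A ≤ Rτ k := le_of_lt (hgt k (Nat.lt_of_succ_le hk.1) (le_of_lt hkn))
    have h1 : Rτ (k + 1) = G (τ ⟨k, hkn⟩) (Rτ k) := hRτ k hkn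
    have h2 : G (τ ⟨k, hkn⟩) (Rτ k) ≤ G (τ ⟨k, hkn⟩) A + (Rτ k - A) :=
      hGlip _ A (Rτ k) hA0 hAk
    simp only [hψ, dif_pos hkn]
    linarith
  have hsub : Finset.Ico (m + 1) n ⊆ (Finset.range n).erase m := by
    intro k hk
    rw [Finset.mem_Ico] at hk
    rw [Finset.mem_erase, Finset.mem_range]
    exact ⟨by omega, hk.2⟩
  have h6 : ∑ k ∈ Finset.Ico (m + 1) n, ψ k ≤ ∑ k ∈ (Finset.range n).erase m, ψ k :=
    Finset.sum_le_sum_of_subset_of_nonneg hsub (fun k _ _ => hψnn k)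
  have h7 : ∑ k ∈ (Finset.range n).erase m, ψ k = (∑ k ∈ Finset.range n, ψ k) - ψ m :=
    Finset.sum_erase_eq_sub (Finset.mem_range.mpr hmn)
  have h8 : ∑ k ∈ Finset.range n, ψ k = ∑ i : Fin n, (G i A - A) := by
    rw [← Fin.sum_univ_eq_sum_range ψ n]
    rw [← Equiv.sum_comp τ (fun i => G i A - A)]
    apply Finset.sum_congr rfl
    intro i _
    simp only [hψ, dif_pos i.isLt, Fin.eta]
  have h9 : ψ m = G j A - A := by simp only [hψ, dif_pos hmn, hj]
  have hfinal : Rτ n ≤ 2 * A := by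
    have := htail
    rw [h7, h8, h9] at h6
    linarith
  linarith
end
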